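/- Let H be a free ℤ-module of rank 8 with basis a₁, a₂, a₃, a₄, b₁, b₂, b₃, b₄. In the exterior power ∧³H, the following identity holds: (a₁∧b₁)∧(−a₂) + (a₁∧b₁ + a₂∧b₂ + a₃∧b₃)∧(−a₄) + (a₁∧b₁ + a₂∧(b₂ − a₃ + b₃))∧(a₂ − a₃ + a₄) + (a₁∧b₁ + a₂∧b₂)∧a₃ + ((−a₂ + a₃)∧b₃)∧(−a₂ + a₄) = −a₂∧a₃∧a₄. -/

import Mathlib

open ExteriorAlgebra

/-- The exterior-algebra computation of the image of an SIP-map under the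
Johnson homomorphism: in the exterior algebra of a free ℤ-module of rank 8
with basis `a₁,a₂,a₃,a₄,b₁,b₂,b₃,b₄`, the sum of the images of the five
bounding-pair maps equals `-a₂∧a₃∧a₄`. -/
theorem johnson_image_of_sip (H : Type*) [AddCommGroup H] [Module ℤ H]
    (B : Module.Basis (Fin 8) ℤ H) :
    letI ι : H →ₗ[ℤ] ExteriorAlgebra ℤ H := ExteriorAlgebra.ι ℤ
    letI a₁ := ι (B 0); letI a₂ := ι (B 1); letI a₃ := ι (B 2); letI a₄ := ι (B 3)
    letI b₁ := ι (B 4); letI b₂ := ι (B 5); letI b₃ := ι (B 6); letI b₄ := ι (B 7)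
    (a₁ * b₁) * (-a₂)
      + (a₁ * b₁ + a₂ * b₂ + a₃ * b₃) * (-a₄)
      + (a₁ * b₁ + a₂ * (b₂ - a₃ + b₃)) * (a₂ - a₃ + a₄)
      + (a₁ * b₁ + a₂ * b₂) * a₃
      + ((-a₂ + a₃) * b₃) * (-a₂ + a₄)
      = -(a₂ * a₃ * a₄) := by
  have sq : ∀ v : H, ExteriorAlgebra.ι ℤ v * ExteriorAlgebra.ι ℤ v = 0 := ι_sq_zero
  have sw : ∀ v w : H, ExteriorAlgebra.ι ℤ w * ExteriorAlgebra.ι ℤ v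
      = -(ExteriorAlgebra.ι ℤ v * ExteriorAlgebra.ι ℤ w) := by
    intro v w; exact eq_neg_of_add_eq_zero_left (by rw [add_comm]; exact ι_add_mul_swap v w)
  set x1 := (letI ι : H →ₗ[ℤ] ExteriorAlgebra ℤ H := ExteriorAlgebra.ι ℤ; ι (B 0))
  set x2 := (letI ι : H →ₗ[ℤ] ExteriorAlgebra ℤ H := ExteriorAlgebra.ι ℤ; ι (B 1))
  set x3 := (letI ι : H →ₗ[ℤ] ExteriorAlgebra ℤ H := ExteriorAlgebra.ι ℤ; ι (B 2))
  set x4 := (letI ι : H →ₗ[ℤ] ExteriorAlgebra ℤ H := ExteriorAlgebra.ι ℤ; ι (B 3))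
  set y2 := (letI ι : H →ₗ[ℤ] ExteriorAlgebra ℤ H := ExteriorAlgebra.ι ℤ; ι (B 5))
  set y3 := (letI ι : H →ₗ[ℤ] ExteriorAlgebra ℤ H := ExteriorAlgebra.ι ℤ; ι (B 6))
  have s32 : x3 * x2 = -(x2 * x3) := sw _ _
  have s42 : x4 * x2 = -(x2 * x4) := sw _ _
  have s43 : x4 * x3 = -(x3 * x4) := sw _ _
  have sb2 : y2 * x2 = -(x2 * y2) := sw _ _
  have sb32 : y3 * x2 = -(x2 * y3) := sw _ _
  have sb33 : y3 * x3 = -(x3 * y3) := sw _ _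
  have sb34 : y3 * x4 = -(x4 * y3) := sw _ _
  have q2 : x2 * x2 = 0 := sq _
  have q3 : x3 * x3 = 0 := sq _
  have s32' : ∀ t, x3 * (x2 * t) = -(x2 * (x3 * t)) := fun t => by
    rw [← mul_assoc, s32, neg_mul, mul_assoc]
  have sb32' : ∀ t, y3 * (x2 * t) = -(x2 * (y3 * t)) := fun t => by
    rw [← mul_assoc, sb32, neg_mul, mul_assoc]
  have sb33' : ∀ t, y3 * (x3 * t) = -(x3 * (y3 * t)) := fun t => by
    rw [← mul_assoc, sb33, neg_mul, mul_assoc]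
  have s42' : ∀ t, x4 * (x2 * t) = -(x2 * (x4 * t)) := fun t => by
    rw [← mul_assoc, s42, neg_mul, mul_assoc]
  have s43' : ∀ t, x4 * (x3 * t) = -(x3 * (x4 * t)) := fun t => by
    rw [← mul_assoc, s43, neg_mul, mul_assoc]
  have q2' : ∀ t, x2 * (x2 * t) = 0 := fun t => by rw [← mul_assoc, q2, zero_mul]
  have q3' : ∀ t, x3 * (x3 * t) = 0 := fun t => by rw [← mul_assoc, q3, zero_mul]
  simp only [mul_add, add_mul, mul_sub, sub_mul, mul_neg, neg_mul, mul_assoc,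
    s32, s42, s43, sb2, sb32, sb33, sb34, q2, q3, s32', s42', s43', sb32', sb33', q2', q3', mul_zero, zero_mul, neg_neg,
    mul_neg, neg_mul]
  abel
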